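/- arXiv:1109.6365 — 2 statements merged into one kernel-verified Lean document; each statement's English description precedes it below -/
import Mathlib

section
/- Let j : ℝ → M₃(ℝ) be a differentiable curve of symmetric matrices and ν, n : ℝ → ℝ³ differentiable curves satisfying dj/dt = [ν̂, j] and dn/dt = ν × n. Fix E ∈ ℝ³, r ∈ ℝ, ẑ ∈ ℝ³ and set σ := r ẑ + n. Then at each time t the spatial Chaplygin-ball equation d/dt(j ν) + (j ν) × ν + (1/2) →[j, ν νᵀ] − E × n = −(ν̇ × σ) × σ − (ν × ṅ) × σ holds if and only if the equivalent form (j + σ̂ σ̂) ν̇ = E × n + ν × (j ν) + σ × (ν × (ν × n)) holds. -/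
open Matrix BigOperators

/-- Levi-Civita symbol on three indices, `eps 0 1 2 = 1`. -/
noncomputable def eps (i j k : Fin 3) : ℝ :=
  (((j : ℕ) : ℝ) - ((i : ℕ) : ℝ)) * (((k : ℕ) : ℝ) - ((j : ℕ) : ℝ)) *
    (((k : ℕ) : ℝ) - ((i : ℕ) : ℝ)) / 2

/-- The hat map: `(hat ν) j k = -∑ l, ε_{jkl} ν l`, so that `hat ν *ᵥ w = ν × w`. -/
noncomputable def hat (ν : Fin 3 → ℝ) : Matrix (Fin 3) (Fin 3) ℝ :=
  Matrix.of fun j k => -(∑ l, eps j k l * ν l)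

/-- The "arrow" map `(→A)_i = ∑_{j,k} ε_{ijk} A j k`. -/
noncomputable def arrow (A : Matrix (Fin 3) (Fin 3) ℝ) : Fin 3 → ℝ :=
  fun i => ∑ j, ∑ k, eps i j k * A j k

lemma hat_eq (v : Fin 3 → ℝ) : hat v = !![0, -v 2, v 1; v 2, 0, -v 0; -v 1, v 0, 0] := by
  ext i k
  fin_cases i <;> fin_cases k <;>
    simp [hat, eps, Fin.sum_univ_three] <;> norm_num

lemma arrow_eq (A : Matrix (Fin 3) (Fin 3) ℝ) :
    arrow A = ![A 1 2 - A 2 1, A 2 0 - A 0 2, A 0 1 - A 1 0] := by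
  funext i
  fin_cases i <;>
    simp [arrow, eps, Fin.sum_univ_three] <;> norm_num <;> ring

lemma cross_eq (a b : Fin 3 → ℝ) :
    crossProduct a b = ![a 1 * b 2 - a 2 * b 1, a 2 * b 0 - a 0 * b 2, a 0 * b 1 - a 1 * b 0] := by
  simp [crossProduct]

set_option maxHeartbeats 2000000 in
/-- along curves satisfying the advection equations
`dj/dt = [ν̂, j]` and `dn/dt = ν × n`, and with `σ = r ẑ + n`, the spatial
Chaplygin-ball equation
`d/dt(j ν) + (j ν) × ν + (1/2) →[j, ν νᵀ] − E × n = −(ν̇ × σ) × σ − (ν × ṅ) × σ`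
holds at `t` iff the equivalent form
`(j + σ̂ σ̂) ν̇ = E × n + ν × (j ν) + σ × (ν × (ν × n))` holds. -/
theorem chaplygin_ball_equation_equivalent_forms
    (j : ℝ → Matrix (Fin 3) (Fin 3) ℝ) (ν ν' n : ℝ → Fin 3 → ℝ)
    (E zhat : Fin 3 → ℝ) (r : ℝ)
    (hsym : ∀ t, (j t)ᵀ = j t)
    (hj : ∀ t i k, HasDerivAt (fun s => j s i k)
        ((hat (ν t) * j t - j t * hat (ν t)) i k) t)
    (hn : ∀ t, HasDerivAt n (crossProduct (ν t) (n t)) t)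
    (hν : ∀ t, HasDerivAt ν (ν' t) t) (t : ℝ) :
    HasDerivAt (fun s => j s *ᵥ ν s)
        (crossProduct E (n t) - crossProduct (j t *ᵥ ν t) (ν t)
          - (1/2 : ℝ) • arrow (j t * vecMulVec (ν t) (ν t) - vecMulVec (ν t) (ν t) * j t)
          - crossProduct (crossProduct (ν' t) (r • zhat + n t)) (r • zhat + n t)
          - crossProduct (crossProduct (ν t) (crossProduct (ν t) (n t))) (r • zhat + n t)) t
    ↔ (j t + hat (r • zhat + n t) * hat (r • zhat + n t)) *ᵥ ν' t
        = crossProduct E (n t) + crossProduct (ν t) (j t *ᵥ ν t)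
          + crossProduct (r • zhat + n t)
              (crossProduct (ν t) (crossProduct (ν t) (n t))) := by
  have hνk : ∀ k, HasDerivAt (fun s => ν s k) (ν' t k) t := fun k =>
    hasDerivAt_pi.mp (hν t) k
  have hD : HasDerivAt (fun s => j s *ᵥ ν s)
      ((hat (ν t) * j t - j t * hat (ν t)) *ᵥ ν t + j t *ᵥ ν' t) t := by
    rw [hasDerivAt_pi]
    intro i
    have h : HasDerivAt (fun s => ∑ k, j s i k * ν s k)
        (∑ k, ((hat (ν t) * j t - j t * hat (ν t)) i k * ν t k + j t i k * ν' t k)) t :=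
      HasDerivAt.fun_sum fun k _ => (hj t i k).mul (hνk k)
    simpa [mulVec, dotProduct, Finset.sum_add_distrib] using h
  have h10 : j t 1 0 = j t 0 1 := by conv_lhs => rw [← hsym t, transpose_apply]
  have h20 : j t 2 0 = j t 0 2 := by conv_lhs => rw [← hsym t, transpose_apply]
  have h21 : j t 2 1 = j t 1 2 := by conv_lhs => rw [← hsym t, transpose_apply]
  have key : ∀ i,
      (crossProduct E (n t) - crossProduct (j t *ᵥ ν t) (ν t)
          - (1/2 : ℝ) • arrow (j t * vecMulVec (ν t) (ν t) - vecMulVec (ν t) (ν t) * j t)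
          - crossProduct (crossProduct (ν' t) (r • zhat + n t)) (r • zhat + n t)
          - crossProduct (crossProduct (ν t) (crossProduct (ν t) (n t))) (r • zhat + n t)) i
        - ((hat (ν t) * j t - j t * hat (ν t)) *ᵥ ν t + j t *ᵥ ν' t) i
      = (crossProduct E (n t) + crossProduct (ν t) (j t *ᵥ ν t)
          + crossProduct (r • zhat + n t)
              (crossProduct (ν t) (crossProduct (ν t) (n t)))) i
        - ((j t + hat (r • zhat + n t) * hat (r • zhat + n t)) *ᵥ ν' t) i := by
    intro i
    fin_cases i <;>
      simp only [Fin.zero_eta, Fin.mk_one, Fin.reduceFinMk, cross_eq, arrow_eq, hat_eq, mulVec, dotProduct, Fin.sum_univ_three,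
        Matrix.mul_apply, Matrix.sub_apply, Matrix.add_apply, vecMulVec_apply,
        Pi.add_apply, Pi.sub_apply, Pi.smul_apply, smul_eq_mul,
        Matrix.cons_val_zero, Matrix.cons_val_one, Matrix.head_cons,
        Matrix.cons_val_two, Matrix.tail_cons, Matrix.cons_val', Matrix.empty_val',
        Matrix.cons_val_fin_one, Matrix.head_fin_const, Matrix.of_apply,
        h10, h20, h21] <;>
      ring
  constructor
  · intro h
    have hCD := h.unique hD
    funext i
    have := congrFun hCD i
    have := key i
    linarith
  · intro h
    have hCD : (crossProduct E (n t) - crossProduct (j t *ᵥ ν t) (ν t)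
          - (1/2 : ℝ) • arrow (j t * vecMulVec (ν t) (ν t) - vecMulVec (ν t) (ν t) * j t)
          - crossProduct (crossProduct (ν' t) (r • zhat + n t)) (r • zhat + n t)
          - crossProduct (crossProduct (ν t) (crossProduct (ν t) (n t))) (r • zhat + n t))
        = ((hat (ν t) * j t - j t * hat (ν t)) *ᵥ ν t + j t *ᵥ ν' t) := by
      funext i
      have := congrFun h i
      have := key i
      linarith
    rw [hCD]
    exact hD
end

section
/- Let ν₀, n₀ ∈ ℝ³ and let j₀ ∈ M₃(ℝ) be symmetric; suppose n₀ = λ ν₀ for some λ ∈ ℝ, j₀ ν₀ = κ ν₀ for some κ ∈ ℝ, and [ν̂₀, j₀] = 0. Fix x₀ ∈ ℝ³, r ∈ ℝ and ẑ ∈ ℝ³. Then the constant curves ν(t) = ν₀, n(t) = n₀, j(t) = j₀, together with the straight-line motion x(t) = x₀ + t (ν₀ × σ(n₀)), solve the full force-free rolling system: dx/dt = ν × σ(n), dn/dt = ν × n, dj/dt = [ν̂, j], and (j + σ̂(n) σ̂(n)) dν/dt = ν × (j ν) + σ(n) × (ν × (ν × n)). Moreover, the translational velocity equals ν₀ ×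 σ(n₀) = r ν₀ × ẑ, a constant vector. -/
open Matrix BigOperators

/-- under the alignment assumptions `n₀ = λ ν₀`, `j₀ ν₀ = κ ν₀`,
`[ν̂₀, j₀] = 0`, the constant curves `ν ≡ ν₀`, `n ≡ n₀`, `j ≡ j₀`, together with
the straight-line motion `x(t) = x₀ + t (ν₀ × σ(n₀))`, solve the full force-free
rolling system, and the translational velocity equals
`ν₀ × σ(n₀) = r ν₀ × ẑ`, a constant vector. -/
theorem straight_line_rolling_solution
    (ν₀ n₀ x₀ zhat : Fin 3 → ℝ) (j₀ : Matrix (Fin 3) (Fin 3) ℝ) (r : ℝ)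
    (hsym : j₀ᵀ = j₀)
    (lam : ℝ) (hlam : n₀ = lam • ν₀)
    (kap : ℝ) (hkap : j₀ *ᵥ ν₀ = kap • ν₀)
    (hcomm : hat ν₀ * j₀ - j₀ * hat ν₀ = 0) :
    (∀ t : ℝ, HasDerivAt (fun s : ℝ => x₀ + s • crossProduct ν₀ (r • zhat + n₀))
        (crossProduct ν₀ (r • zhat + n₀)) t) ∧
    (∀ t : ℝ, HasDerivAt (fun _ : ℝ => n₀) (crossProduct ν₀ n₀) t) ∧
    (∀ (t : ℝ) (i k : Fin 3), HasDerivAt (fun _ : ℝ => j₀ i k)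
        ((hat ν₀ * j₀ - j₀ * hat ν₀) i k) t) ∧
    (∀ t : ℝ, HasDerivAt (fun _ : ℝ => ν₀) (0 : Fin 3 → ℝ) t) ∧
    (j₀ + hat (r • zhat + n₀) * hat (r • zhat + n₀)) *ᵥ (0 : Fin 3 → ℝ)
      = crossProduct ν₀ (j₀ *ᵥ ν₀)
        + crossProduct (r • zhat + n₀) (crossProduct ν₀ (crossProduct ν₀ n₀)) ∧
    crossProduct ν₀ (r • zhat + n₀) = r • crossProduct ν₀ zhat := by
  have h1 : crossProduct ν₀ n₀ = 0 := by
    rw [hlam, LinearMap.map_smul, cross_self, smul_zero]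
  refine ⟨?_, ?_, ?_, ?_, ?_, ?_⟩
  · intro t
    simpa using ((hasDerivAt_id t).smul_const
      (crossProduct ν₀ (r • zhat + n₀))).const_add x₀
  · intro t; rw [h1]; exact hasDerivAt_const t n₀
  · intro t i k; rw [hcomm]; simpa using hasDerivAt_const t (j₀ i k)
  · intro t; exact hasDerivAt_const t ν₀
  · rw [Matrix.mulVec_zero, hkap, LinearMap.map_smul, cross_self, smul_zero, h1, map_zero,
      map_zero, add_zero]
  · rw [map_add, LinearMap.map_smul, h1, add_zero]
end
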